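/- Let {X,N} be a solution of Tsirelson's equation with noise law μ. The following are equivalent: (i) {X,N} is a strong solution; (ii) F^{X,N}_k = F^N_k up to P-null sets for some k ∈ -ℕ; (iii) F^{X,N}_0 = F^N_0 up to P-null sets. -/

import Mathlib

open MeasureTheory ProbabilityTheory Filter Topology
open scoped NNReal ENNReal

universe u v w w₂

noncomputable section

/-- The sub-σ-field generated by the process `Y` from index `k` on; since index `j : ℕ`
stands for time `-j`, this is the σ-field of the past `σ(Y_j : j ≤ -k)`. -/
def past {Ω α : Type*} [MeasurableSpace α] (Y : ℕ → Ω → α) (k : ℕ) : MeasurableSpace Ω :=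
  ⨆ j ≥ k, MeasurableSpace.comap (Y j) inferInstance

/-- A solution of Tsirelson's equation with noise law `μ`.  The index `k : ℕ` stands for the
time `-k ∈ -ℕ`, so that time `k - 1` corresponds to index `k + 1`. -/
structure IsSolution {Ω S G : Type*} [MeasurableSpace Ω] [MeasurableSpace S] [MeasurableSpace G]
    [SMul G S] (P : Measure Ω) (μ : ℕ → Measure G)
    (X : ℕ → Ω → S) (N : ℕ → Ω → G) : Prop where
  measurable_X : ∀ k, Measurable (X k)
  measurable_N : ∀ k, Measurable (N k)
  eqn : ∀ k, X k =ᵐ[P] fun ω => N k ω • X (k + 1) ω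
  indep : ∀ k, Indep (MeasurableSpace.comap (N k) inferInstance)
      (past X (k + 1) ⊔ past N (k + 1)) P
  law_N : ∀ k, P.map (N k) = μ k

/-- The joint law of `(X, N)` on the path space `S^{-ℕ} × Σ^{-ℕ}`. -/
def jointLaw {Ω S G : Type*} [MeasurableSpace Ω] [MeasurableSpace S] [MeasurableSpace G]
    (P : Measure Ω) (X : ℕ → Ω → S) (N : ℕ → Ω → G) : Measure ((ℕ → S) × (ℕ → G)) :=
  P.map fun ω => (fun k => X k ω, fun k => N k ω)

/-- A solution is strong if each `X k` is a.s. equal to a `past N k`-measurable function,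
i.e. `X k` is measurable for the `P`-completion of `σ(N_j : j ≤ -k)`. -/
def IsStrong {Ω S G : Type*} [MeasurableSpace Ω] [MeasurableSpace S] [MeasurableSpace G]
    (P : Measure Ω) (X : ℕ → Ω → S) (N : ℕ → Ω → G) : Prop :=
  ∀ k, ∃ Y : Ω → S, Measurable[past N k] Y ∧ X k =ᵐ[P] Y

/-- Triviality of the tail σ-field `⨅ k, m k`. -/
def TailTrivial {Ω : Type*} [MeasurableSpace Ω] (P : Measure Ω)
    (m : ℕ → MeasurableSpace Ω) : Prop :=
  ∀ A : Set Ω, MeasurableSet[⨅ k, m k] A → P A = 0 ∨ P A = 1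

/-- Convolution `μ * ν` of a measure on the acting semigroup with a measure on the space:
the pushforward of `μ ⊗ ν` under the action map. -/
def conv {G S : Type*} [MeasurableSpace G] [MeasurableSpace S] [SMul G S]
    (μ : Measure G) (ν : Measure S) : Measure S :=
  (μ.prod ν).map fun p => p.1 • p.2

/-- Convolution of two measures on the semigroup. -/
def convG {G : Type*} [MeasurableSpace G] [Mul G] (μ ν : Measure G) : Measure G :=
  (μ.prod ν).map fun p => p.1 * p.2

/-- `prodN N n j = N_n · N_{n+1} · ⋯ · N_{n+j}`; in the time-indexing of the paper (index `m`
is time `-m`) this is `N_{k,l}` with `k = -n` and `l = -(n+j)-1 → -∞` as `j → ∞`. -/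
def prodN {Ω G : Type*} [Mul G] (N : ℕ → Ω → G) (n : ℕ) : ℕ → Ω → G
  | 0 => N n
  | j + 1 => fun ω => prodN N n j ω * N (n + j + 1) ω

/-- `convIter μ n j = μ_n * μ_{n+1} * ⋯ * μ_{n+j}`, the law analogue of `prodN`. -/
def convIter {G : Type*} [MeasurableSpace G] [Mul G] (μ : ℕ → Measure G) (n : ℕ) :
    ℕ → Measure G
  | 0 => μ n
  | j + 1 => convG (convIter μ n j) (μ (n + j + 1))

/-- `sigPow G n` is `Σ^{n+1}`, the set of products of `n+1` elements of `Σ = G`. -/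
def sigPow (G : Type*) [Mul G] : ℕ → Set G
  | 0 => Set.univ
  | n + 1 => Set.image2 (· * ·) (sigPow G n) Set.univ

/-- Two sub-σ-fields are equal up to `P`-null sets. -/
def EqModNull {Ω : Type*} [MeasurableSpace Ω] (P : Measure Ω)
    (m₁ m₂ : MeasurableSpace Ω) : Prop :=
  (∀ A, MeasurableSet[m₁] A → ∃ B, MeasurableSet[m₂] B ∧ P (symmDiff A B) = 0) ∧
  (∀ B, MeasurableSet[m₂] B → ∃ A, MeasurableSet[m₁] A ∧ P (symmDiff A B) = 0)

end

section Context

variable {S : Type u} {G : Type v}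
  [TopologicalSpace S] [CompactSpace S] [TopologicalSpace.MetrizableSpace S]
  [SecondCountableTopology S] [MeasurableSpace S] [BorelSpace S]
  [TopologicalSpace G] [CompactSpace G] [TopologicalSpace.MetrizableSpace G]
  [SecondCountableTopology G] [MeasurableSpace G] [BorelSpace G]
  [Semigroup G] [ContinuousMul G]
  [SMul G S] [ContinuousSMul G S] [IsScalarTower G G S]

end Context

section Tsirelson

variable {S : Type u} {G : Type v}
  [TopologicalSpace S] [CompactSpace S] [TopologicalSpace.MetrizableSpace S]
  [SecondCountableTopology S] [MeasurableSpace S] [BorelSpace S]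
  [TopologicalSpace G] [CompactSpace G] [TopologicalSpace.MetrizableSpace G]
  [SecondCountableTopology G] [MeasurableSpace G] [BorelSpace G]
  [Semigroup G] [ContinuousMul G]
  [SMul G S] [ContinuousSMul G S] [IsScalarTower G G S]

section Helpers

variable {Ω α : Type*} [mα : MeasurableSpace α]

lemma comap_le_past (Y : ℕ → Ω → α) {j k : ℕ} (h : k ≤ j) :
    MeasurableSpace.comap (Y j) mα ≤ past Y k :=
  le_iSup₂ (f := fun j (_ : j ≥ k) => MeasurableSpace.comap (Y j) mα) j h

lemma past_mono (Y : ℕ → Ω → α) {k l : ℕ} (h : k ≤ l) : past Y l ≤ past Y k :=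
  iSup₂_le fun j hj => comap_le_past Y (h.trans hj)

lemma past_le {mΩ : MeasurableSpace Ω} {Y : ℕ → Ω → α} (hY : ∀ j, Measurable (Y j)) (k : ℕ) :
    past Y k ≤ mΩ :=
  iSup₂_le fun j _ => (hY j).comap_le

lemma measurable_past {Y : ℕ → Ω → α} {j k : ℕ} (h : k ≤ j) : Measurable[past Y k] (Y j) :=
  measurable_iff_comap_le.2 (comap_le_past Y h)

lemma past_succ (Y : ℕ → Ω → α) (n : ℕ) :
    past Y n = MeasurableSpace.comap (Y n) mα ⊔ past Y (n + 1) := by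
  refine le_antisymm (iSup₂_le fun j hj => ?_)
    (sup_le (comap_le_past Y le_rfl) (past_mono Y n.le_succ))
  rcases hj.eq_or_lt with rfl | h
  · exact le_sup_left
  · exact le_trans (comap_le_past Y h) le_sup_right

/-- The σ-algebra of sets approximable by `m`-measurable sets up to `P`-null sets. -/
def approxMS {Ω : Type*} {mΩ : MeasurableSpace Ω} (P : Measure Ω) (m : MeasurableSpace Ω) :
    MeasurableSpace Ω where
  MeasurableSet' A := ∃ B, MeasurableSet[m] B ∧ P (symmDiff A B) = 0
  measurableSet_empty := ⟨∅, MeasurableSet.empty, by simp⟩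
  measurableSet_compl := fun A ⟨B, hB, h0⟩ => ⟨Bᶜ, hB.compl, by rwa [compl_symmDiff_compl]⟩
  measurableSet_iUnion := fun f hf => by
    choose B hB h0 using hf
    refine ⟨⋃ i, B i, MeasurableSet.iUnion hB, measure_mono_null ?_ (measure_iUnion_null h0)⟩
    intro ω hω
    rw [Set.mem_symmDiff] at hω
    rcases hω with ⟨hω1, hω2⟩ | ⟨hω1, hω2⟩
    · rcases Set.mem_iUnion.1 hω1 with ⟨i, hi⟩
      exact Set.mem_iUnion.2 ⟨i, Set.mem_symmDiff.2 (Or.inl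
        ⟨hi, fun h => hω2 (Set.mem_iUnion.2 ⟨i, h⟩)⟩)⟩
    · rcases Set.mem_iUnion.1 hω1 with ⟨i, hi⟩
      exact Set.mem_iUnion.2 ⟨i, Set.mem_symmDiff.2 (Or.inr
        ⟨hi, fun h => hω2 (Set.mem_iUnion.2 ⟨i, h⟩)⟩)⟩

lemma mem_approxMS {Ω : Type*} {mΩ : MeasurableSpace Ω} {P : Measure Ω} {m : MeasurableSpace Ω}
    {A : Set Ω} :
    MeasurableSet[approxMS P m] A ↔ ∃ B, MeasurableSet[m] B ∧ P (symmDiff A B) = 0 := Iff.rfl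

lemma le_approxMS {Ω : Type*} {mΩ : MeasurableSpace Ω} (P : Measure Ω) (m : MeasurableSpace Ω) :
    m ≤ approxMS P m := fun A hA => ⟨A, hA, by simp⟩

end Helpers

section L2
variable {Ω : Type*} {mΩ : MeasurableSpace Ω}

lemma simplefunc_ae_eq (P : Measure Ω) {m₁ m₂ : MeasurableSpace Ω}
    (h : ∀ A, MeasurableSet[m₁] A → ∃ B, MeasurableSet[m₂] B ∧ P (symmDiff A B) = 0)
    (t : @SimpleFunc Ω m₁ ℝ) :
    ∃ g : Ω → ℝ, Measurable[m₂] g ∧ ⇑t =ᵐ[P] g := by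
  refine @SimpleFunc.induction Ω ℝ m₁ _
    (fun t => ∃ g : Ω → ℝ, Measurable[m₂] g ∧ ⇑t =ᵐ[P] g) ?_ ?_ t
  · intro c A hA
    obtain ⟨B, hB, h0⟩ := h A hA
    refine ⟨B.indicator (fun _ => c), (measurable_const : Measurable[m₂] fun _ : Ω => c).indicator hB, ?_⟩
    refine ae_iff.2 (measure_mono_null ?_ h0)
    intro ω hω
    simp only [Set.mem_setOf_eq, SimpleFunc.coe_piecewise, SimpleFunc.coe_const,
      Set.piecewise, Set.indicator_apply] at hω
    rw [Set.mem_symmDiff]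
    by_cases h1 : ω ∈ A <;> by_cases h2 : ω ∈ B
    · simp [h1, h2] at hω
    · exact Or.inl ⟨h1, h2⟩
    · exact Or.inr ⟨h2, h1⟩
    · simp [h1, h2] at hω
  · rintro t t' _ ⟨g, hg, hgt⟩ ⟨g', hg', hgt'⟩
    refine ⟨g + g', hg.add hg', ?_⟩
    have hco : ⇑(t + t') = ⇑t + ⇑t' := @SimpleFunc.coe_add Ω ℝ m₁ _ t t'
    rw [hco]
    exact hgt.add hgt'

lemma exists_ae_eq_measurable_real (P : Measure Ω) {m₁ m₂ : MeasurableSpace Ω}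
    {f : Ω → ℝ} (hf : Measurable[m₁] f)
    (h : ∀ A, MeasurableSet[m₁] A → ∃ B, MeasurableSet[m₂] B ∧ P (symmDiff A B) = 0) :
    ∃ g : Ω → ℝ, Measurable[m₂] g ∧ f =ᵐ[P] g := by
  have hsm : StronglyMeasurable[m₁] f := hf.stronglyMeasurable
  set t : ℕ → @SimpleFunc Ω m₁ ℝ := hsm.approx with ht
  have htend : ∀ ω, Tendsto (fun n => t n ω) atTop (𝓝 (f ω)) := hsm.tendsto_approx
  choose g hg hgt using fun n => simplefunc_ae_eq P h (t n)
  have hnull : P (⋃ n, {ω | ¬ ((t n) ω = g n ω)}) = 0 :=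
    measure_iUnion_null fun n => ae_iff.1 (hgt n)
  set C : Set Ω := {ω | ∃ c, Tendsto (fun n => g n ω) atTop (𝓝 c)} with hC
  have hCm : MeasurableSet[m₂] C := @measurableSet_exists_tendsto ℕ ℝ Ω m₂ _ _ _ _ _ _ atTop _ g hg
  set g' : ℕ → Ω → ℝ := fun n => C.indicator (g n) with hg'
  have hg'm : ∀ n, Measurable[m₂] (g' n) := fun n => (hg n).indicator hCm
  have hg'eq : ∀ ω ∈ C, ∀ n, g' n ω = g n ω := fun ω hω n => Set.indicator_of_mem hω _
  have hg'eq' : ∀ ω ∉ C, ∀ n, g' n ω = 0 := fun ω hω n => Set.indicator_of_notMem hω _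
  have hconv : ∀ ω, Tendsto (fun n => g' n ω) atTop (𝓝 (limUnder atTop (fun n => g' n ω))) := by
    intro ω
    by_cases hωC : ω ∈ C
    · obtain ⟨c, hc⟩ := hωC
      have he : (fun n => g' n ω) = fun n => g n ω := funext fun n => hg'eq ω ⟨c, hc⟩ n
      rw [he]
      exact tendsto_nhds_limUnder ⟨c, hc⟩
    · have he : (fun n => g' n ω) = fun _ => 0 := funext fun n => hg'eq' ω hωC n
      rw [he]
      exact tendsto_nhds_limUnder ⟨0, tendsto_const_nhds⟩
  set L : Ω → ℝ := fun ω => limUnder atTop (fun n => g' n ω) with hL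
  have hLm : Measurable[m₂] L := by
    refine @measurable_of_tendsto_metrizable Ω ℝ m₂ _ _ _ _ g' L hg'm ?_
    rw [tendsto_pi_nhds]
    exact hconv
  refine ⟨L, hLm, ?_⟩
  have hsub : {ω | ¬ f ω = L ω} ⊆ ⋃ n, {ω | ¬ ((t n) ω = g n ω)} := by
    intro ω hω
    by_contra hmem
    simp only [Set.mem_iUnion, Set.mem_setOf_eq, not_exists, not_not] at hmem
    have heq : ∀ n, g n ω = t n ω := fun n => (hmem n).symm
    have htd : Tendsto (fun n => g n ω) atTop (𝓝 (f ω)) := by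
      simpa only [heq] using htend ω
    have hωC : ω ∈ C := ⟨f ω, htd⟩
    have htd' : Tendsto (fun n => g' n ω) atTop (𝓝 (f ω)) := by
      have he : (fun n => g' n ω) = fun n => g n ω := funext fun n => hg'eq ω hωC n
      rw [he]; exact htd
    exact hω (tendsto_nhds_unique htd' (hconv ω))
  exact ae_iff.2 (measure_mono_null hsub hnull)

end L2

section L2S
variable {S : Type u}
  [TopologicalSpace S] [CompactSpace S] [TopologicalSpace.MetrizableSpace S]
  [SecondCountableTopology S] [MeasurableSpace S] [BorelSpace S]

lemma exists_embedding_real (S : Type u) [TopologicalSpace S] [CompactSpace S]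
    [TopologicalSpace.MetrizableSpace S] [SecondCountableTopology S] [MeasurableSpace S]
    [BorelSpace S] : ∃ e : S → ℝ, MeasurableEmbedding e := by
  letI : MetricSpace S := TopologicalSpace.metrizableSpaceMetric S
  haveI : PolishSpace S := inferInstance
  exact exists_measurableEmbedding_real S

lemma exists_ae_eq_measurable {Ω : Type*} {mΩ : MeasurableSpace Ω} (P : Measure Ω)
    [Nonempty S] {m₁ m₂ : MeasurableSpace Ω} {f : Ω → S} (hf : Measurable[m₁] f)
    (h : ∀ A, MeasurableSet[m₁] A → ∃ B, MeasurableSet[m₂] B ∧ P (symmDiff A B) = 0) :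
    ∃ Y : Ω → S, Measurable[m₂] Y ∧ f =ᵐ[P] Y := by
  obtain ⟨e, he⟩ := exists_embedding_real S
  obtain ⟨r, hr, hre⟩ := he.exists_measurable_extend measurable_id (fun _ => ‹Nonempty S›)
  obtain ⟨g, hg, hfg⟩ := exists_ae_eq_measurable_real P (he.measurable.comp hf) h
  refine ⟨r ∘ g, hr.comp hg, ?_⟩
  filter_upwards [hfg] with ω hω
  have : r (e (f ω)) = f ω := congrFun hre (f ω)
  simp only [Function.comp_apply, ← hω, this]

end L2S

section L3
variable {Ω : Type*}

lemma indepFun_of_indep {mΩ : MeasurableSpace Ω} {P : Measure Ω}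
    {m₁ m₂ : MeasurableSpace Ω} (hind : Indep m₁ m₂ P)
    {f g : Ω → ℝ} (hf : Measurable[m₁] f) (hg : Measurable[m₂] g) :
    IndepFun f g P :=
  indepFun_iff_measure_inter_preimage_eq_mul.2 fun s t hs ht =>
    (Indep_iff _ _ _).1 hind _ _ (hf hs) (hg ht)

lemma indep_drop {m₂ F H : MeasurableSpace Ω} {mΩ : MeasurableSpace Ω} (P : Measure Ω)
    [IsProbabilityMeasure P] (hm₂ : m₂ ≤ mΩ) (hFH : F ≤ H) (hH : H ≤ mΩ)
    (hind : Indep m₂ H P) {D : Set Ω} (hD : MeasurableSet[H] D)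
    {E : Set Ω} (hE : MeasurableSet[m₂ ⊔ F] E) (hDE : P (symmDiff D E) = 0) :
    ∃ E', MeasurableSet[F] E' ∧ P (symmDiff D E') = 0 := by
  have hF : F ≤ mΩ := hFH.trans hH
  have hsup : m₂ ⊔ F ≤ mΩ := sup_le hm₂ hF
  set f : Ω → ℝ := D.indicator (fun _ => 1) with hf_def
  have hDm : MeasurableSet[mΩ] D := hH D hD
  have hf_int : Integrable f P := (integrable_const (1 : ℝ) (μ := P)).indicator hDm
  set g : Ω → ℝ := P[f | F] with hg_def
  have hgsm : StronglyMeasurable[F] g := stronglyMeasurable_condExp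
  have hgm : Measurable[F] g := hgsm.measurable
  have hg_int : Integrable g P := integrable_condExp
  -- a computation of set integrals of `f`
  have hfint : ∀ s : Set Ω, MeasurableSet[mΩ] s → ∫ x in s, f x ∂P = (P (s ∩ D)).toReal := by
    intro s hs
    rw [hf_def, setIntegral_indicator hDm]
    simp [Measure.restrict_apply hDm, Set.inter_comm D s]
    rfl
  -- the π-system generating `m₂ ⊔ F`
  set π : Set (Set Ω) := {s | ∃ A, MeasurableSet[m₂] A ∧ ∃ B, MeasurableSet[F] B ∧ s = A ∩ B}
    with hπ
  have h_eq : m₂ ⊔ F = MeasurableSpace.generateFrom π := by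
    refine le_antisymm (sup_le ?_ ?_) (MeasurableSpace.generateFrom_le ?_)
    · intro s hs
      exact MeasurableSpace.measurableSet_generateFrom
        ⟨s, hs, Set.univ, MeasurableSet.univ, (Set.inter_univ s).symm⟩
    · intro s hs
      exact MeasurableSpace.measurableSet_generateFrom
        ⟨Set.univ, MeasurableSet.univ, s, hs, (Set.univ_inter s).symm⟩
    · rintro s ⟨A, hA, B, hB, rfl⟩
      exact ((le_sup_left : m₂ ≤ m₂ ⊔ F) A hA).inter ((le_sup_right : F ≤ m₂ ⊔ F) B hB)
  have h_inter : IsPiSystem π := by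
    rintro s ⟨A, hA, B, hB, rfl⟩ t ⟨A', hA', B', hB', rfl⟩ -
    exact ⟨A ∩ A', hA.inter hA', B ∩ B', hB.inter hB', Set.inter_inter_inter_comm A B A' B'⟩
  -- integrals agree on all sets of `m₂ ⊔ F`
  have key : ∀ s : Set Ω, MeasurableSet[m₂ ⊔ F] s → ∫ x in s, g x ∂P = ∫ x in s, f x ∂P := by
    refine @MeasurableSpace.induction_on_inter Ω (m₂ ⊔ F)
      (fun s _ => ∫ x in s, g x ∂P = ∫ x in s, f x ∂P) π h_eq h_inter (by simp) ?_ ?_ ?_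
    · rintro s ⟨A, hA, B, hB, rfl⟩
      have hAm : MeasurableSet[mΩ] A := hm₂ A hA
      have hBm : MeasurableSet[mΩ] B := hF B hB
      have hABm : MeasurableSet[mΩ] (A ∩ B) := hAm.inter hBm
      have hBDm : MeasurableSet[mΩ] (B ∩ D) := hBm.inter hDm
      have hBDH : MeasurableSet[H] (B ∩ D) := (hFH B hB).inter hD
      -- RHS
      have hrhs : ∫ x in A ∩ B, f x ∂P = (P A).toReal * (P (B ∩ D)).toReal := by
        rw [hfint _ hABm]
        have : A ∩ B ∩ D = A ∩ (B ∩ D) := Set.inter_assoc A B D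
        rw [this, (Indep_iff _ _ _).1 hind A (B ∩ D) hA hBDH, ENNReal.toReal_mul]
      -- LHS
      have hprod : ∫ x in A ∩ B, g x ∂P
          = ∫ x, ((A.indicator (fun _ => (1 : ℝ))) * (B.indicator g)) x ∂P := by
        rw [← integral_indicator hABm]
        congr 1
        funext ω
        by_cases h1 : ω ∈ A <;> by_cases h2 : ω ∈ B <;>
          simp [Set.indicator_apply, h1, h2]
      have hIF : IndepFun (A.indicator (fun _ => (1 : ℝ))) (B.indicator g) P :=
        indepFun_of_indep hind
          ((measurable_const : Measurable[m₂] fun _ : Ω => (1 : ℝ)).indicator hA)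
          ((hgm.mono hFH le_rfl).indicator (hFH B hB))
      have hint1 : Integrable (A.indicator (fun _ => (1 : ℝ))) P :=
        (integrable_const (1 : ℝ) (μ := P)).indicator hAm
      have hint2 : Integrable (B.indicator g) P := hg_int.indicator hBm
      have hlhs : ∫ x in A ∩ B, g x ∂P = (P A).toReal * ∫ x in B, g x ∂P := by
        rw [hprod, IndepFun.integral_mul_eq_mul_integral hIF hint1.aestronglyMeasurable hint2.aestronglyMeasurable, ← integral_indicator hBm]
        congr 1
        rw [integral_indicator_const (1 : ℝ) hAm]
        simp
        rfl
      rw [hlhs, hrhs, setIntegral_condExp hF hf_int hB, hfint _ hBm]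
    · intro s hs hC
      have hsm : MeasurableSet[mΩ] s := hsup s hs
      have h1 := integral_add_compl hsm hg_int
      have h2 := integral_add_compl hsm hf_int
      have h3 : ∫ x, g x ∂P = ∫ x, f x ∂P := integral_condExp hF
      linarith
    · intro u hdisj hmeas hC
      rw [integral_iUnion (fun i => hsup _ (hmeas i)) hdisj hg_int.integrableOn,
        integral_iUnion (fun i => hsup _ (hmeas i)) hdisj hf_int.integrableOn]
      exact tsum_congr hC
  have hgm12 : g =ᵐ[P] P[f | m₂ ⊔ F] :=
    ae_eq_condExp_of_forall_setIntegral_eq hsup hf_int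
      (fun s _ _ => hg_int.integrableOn) (fun s hs _ => key s hs)
      ⟨g, StronglyMeasurable.mono hgsm le_sup_right, ae_eq_refl g⟩
  have hfE : f =ᵐ[P] E.indicator (fun _ => (1 : ℝ)) := by
    refine ae_iff.2 (measure_mono_null ?_ hDE)
    intro ω hω
    rw [Set.mem_symmDiff]
    simp only [Set.mem_setOf_eq, hf_def, Set.indicator_apply] at hω
    by_cases h1 : ω ∈ D <;> by_cases h2 : ω ∈ E
    · simp [h1, h2] at hω
    · exact Or.inl ⟨h1, h2⟩
    · exact Or.inr ⟨h2, h1⟩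
    · simp [h1, h2] at hω
  have hfsm' : AEStronglyMeasurable[m₂ ⊔ F] f P :=
    ⟨E.indicator (fun _ => (1 : ℝ)), stronglyMeasurable_const.indicator hE, hfE⟩
  have hcond : P[f | m₂ ⊔ F] =ᵐ[P] f := condExp_of_aestronglyMeasurable' hsup hfsm' hf_int
  have hfg : f =ᵐ[P] g := (hgm12.trans hcond).symm
  refine ⟨g ⁻¹' {1}, hgm (measurableSet_singleton 1), ?_⟩
  refine measure_mono_null ?_ (ae_iff.1 hfg)
  intro ω hω
  rw [Set.mem_symmDiff] at hω
  simp only [Set.mem_setOf_eq, hf_def]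
  rcases hω with ⟨h1, h2⟩ | ⟨h1, h2⟩
  · simp only [Set.mem_preimage, Set.mem_singleton_iff] at h2
    intro h
    rw [Set.indicator_of_mem h1] at h
    exact h2 h.symm
  · simp only [Set.mem_preimage, Set.mem_singleton_iff] at h1
    intro h
    rw [Set.indicator_of_notMem h2] at h
    rw [h1] at h
    norm_num at h

end L3

/-- For a solution `{X,N}`, the following are equivalent:
(i) `{X,N}` is strong; (ii) `F^{X,N}_k = F^N_k` up to `P`-null sets for some `k`;
(iii) `F^{X,N}_0 = F^N_0` up to `P`-null sets. -/
theorem tsirelson_strong_iff_sigma_fields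
    {Ω : Type w} [MeasurableSpace Ω] (P : Measure Ω) [IsProbabilityMeasure P]
    (μ : ℕ → Measure G) (hμ : ∀ k, IsProbabilityMeasure (μ k))
    (X : ℕ → Ω → S) (N : ℕ → Ω → G) (hsol : IsSolution P μ X N) :
    (IsStrong P X N ↔ ∃ k, EqModNull P (past X k ⊔ past N k) (past N k)) ∧
    ((∃ k, EqModNull P (past X k ⊔ past N k) (past N k)) ↔
      EqModNull P (past X 0 ⊔ past N 0) (past N 0)) := by
  have hXm := hsol.measurable_X
  have hNm := hsol.measurable_N
  have hNle : ∀ n, past N n ≤ ‹MeasurableSpace Ω› := fun n => past_le hNm n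
  have hXle : ∀ n, past X n ≤ ‹MeasurableSpace Ω› := fun n => past_le hXm n
  have hJle : ∀ n, past X n ⊔ past N n ≤ ‹MeasurableSpace Ω› :=
    fun n => sup_le (hXle n) (hNle n)
  have hΩ : Nonempty Ω := by
    by_contra h
    rw [not_nonempty_iff] at h
    have h1 : P Set.univ = 1 := measure_univ
    rw [Set.univ_eq_empty_iff.2 h] at h1
    simp at h1
  haveI : Nonempty S := hΩ.map (X 0)
  -- the one-sided approximation predicate
  set Q : ℕ → Prop := fun n => ∀ D, MeasurableSet[past X n ⊔ past N n] D →
    ∃ B, MeasurableSet[past N n] B ∧ P (symmDiff D B) = 0 with hQ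
  have one_sided : ∀ n, Q n → EqModNull P (past X n ⊔ past N n) (past N n) := by
    intro n hn
    exact ⟨hn, fun B hB => ⟨B, (le_sup_right : past N n ≤ _) B hB, by simp⟩⟩
  have strong_to_Q : IsStrong P X N → ∀ n, Q n := by
    intro hst n
    have hle : past X n ⊔ past N n ≤ approxMS P (past N n) := by
      refine sup_le ?_ (le_approxMS P _)
      refine iSup₂_le fun j hj => ?_
      rintro A ⟨s, hs, rfl⟩
      obtain ⟨Y, hY, hXY⟩ := hst j
      refine ⟨Y ⁻¹' s, past_mono N hj _ (hY hs), ?_⟩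
      refine measure_mono_null ?_ (ae_iff.1 hXY)
      intro ω hω
      rw [Set.mem_symmDiff] at hω
      simp only [Set.mem_preimage] at hω
      simp only [Set.mem_setOf_eq]
      rcases hω with ⟨h1, h2⟩ | ⟨h1, h2⟩
      · exact fun h => h2 (by rw [← h]; exact h1)
      · exact fun h => h2 (by rw [h]; exact h1)
    exact fun D hD => hle D hD
  have Q_succ : ∀ n, Q n → Q (n + 1) := by
    intro n hn D hD
    have hDn : MeasurableSet[past X n ⊔ past N n] D :=
      (sup_le_sup (past_mono X n.le_succ) (past_mono N n.le_succ)) D hD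
    obtain ⟨E, hE, hDE⟩ := hn D hDn
    have hE' : MeasurableSet[MeasurableSpace.comap (N n) inferInstance ⊔ past N (n + 1)] E := by
      rw [← past_succ]; exact hE
    exact indep_drop P ((hNm n).comap_le) le_sup_right (hJle (n + 1)) (hsol.indep n) hD hE' hDE
  have Q_strong_at : ∀ n, Q n → ∃ Y : Ω → S, Measurable[past N n] Y ∧ X n =ᵐ[P] Y := by
    intro n hn
    simp only [hQ] at hn
    exact exists_ae_eq_measurable P (m₁ := past X n ⊔ past N n)
      ((measurable_past le_rfl).mono (le_sup_left : past X n ≤ past X n ⊔ past N n) le_rfl) hn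
  have Q_to_strong : (∃ k, Q k) → IsStrong P X N := by
    rintro ⟨k, hk⟩
    have hup : ∀ j, Q (k + j) := by
      intro j
      induction j with
      | zero => exact hk
      | succ j ih => exact Q_succ (k + j) ih
    have hge : ∀ n, k ≤ n → ∃ Y : Ω → S, Measurable[past N n] Y ∧ X n =ᵐ[P] Y := by
      intro n hkn
      have h := hup (n - k)
      rw [Nat.add_sub_cancel' hkn] at h
      exact Q_strong_at n h
    have hdown : ∀ d n, k ≤ n + d → ∃ Y : Ω → S, Measurable[past N n] Y ∧ X n =ᵐ[P] Y := by
      intro d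
      induction d with
      | zero => intro n hn; exact hge n (by simpa using hn)
      | succ d ih =>
        intro n hn
        by_cases hkn : k ≤ n
        · exact hge n hkn
        · obtain ⟨Y, hY, hXY⟩ := ih (n + 1) (by omega)
          refine ⟨fun ω => N n ω • Y ω, ?_, ?_⟩
          · have h1 : Measurable[past N n] (N n) := measurable_past le_rfl
            have h2 : Measurable[past N n] Y := hY.mono (past_mono N n.le_succ) le_rfl
            have hsmul : Measurable fun p : G × S => p.1 • p.2 := continuous_smul.measurable
            exact hsmul.comp (h1.prodMk h2)
          · filter_upwards [hsol.eqn n, hXY] with ω h h'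
            rw [h, h']
    intro n
    exact hdown k n (Nat.le_add_left k n)
  refine ⟨⟨fun hst => ⟨0, one_sided 0 (strong_to_Q hst 0)⟩,
    fun ⟨k, hk⟩ => Q_to_strong ⟨k, hk.1⟩⟩,
    ⟨fun ⟨k, hk⟩ => one_sided 0 (strong_to_Q (Q_to_strong ⟨k, hk.1⟩) 0),
    fun h0 => ⟨0, h0⟩⟩⟩


end Tsirelson
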